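/- Removing a directed path of maximum length from a nonempty acyclic digraph decreases the excess by exactly one. -/

import Mathlib

open Finset

variable {V : Type*}

/-- Out-degree of a vertex in a digraph. -/
noncomputable def outDeg (D : V → V → Prop) (v : V) : ℕ := Nat.card {u // D v u}

/-- In-degree of a vertex in a digraph. -/
noncomputable def inDeg (D : V → V → Prop) (v : V) : ℕ := Nat.card {u // D u v}

/-- The (signed) excess of a vertex: `d⁺(v) − d⁻(v)`. -/
noncomputable def exInt (D : V → V → Prop) (v : V) : ℤ :=
  (outDeg D v : ℤ) - (inDeg D v : ℤ)

/-- Positive excess `ex⁺(v) = max{d⁺(v)−d⁻(v),0}`. -/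
noncomputable def exPlus (D : V → V → Prop) (v : V) : ℕ := (exInt D v).toNat

/-- Negative excess `ex⁻(v) = max{d⁻(v)−d⁺(v),0}`. -/
noncomputable def exMinus (D : V → V → Prop) (v : V) : ℕ := (-(exInt D v)).toNat

/-- The excess of a digraph: `ex(D) = ∑_v ex⁺(v) = (1/2)∑_v |ex(v)|`. -/
noncomputable def exD [Fintype V] (D : V → V → Prop) : ℕ := ∑ v, exPlus D v

/-- The list of (directed) edges traversed by a path, given as its list of vertices. -/
def pathEdges (p : List V) : List (V × V) := p.zip p.tail

/-- A directed path of `D` with at least one edge, given by its list of (distinct) vertices. -/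
def IsPath (D : V → V → Prop) (p : List V) : Prop :=
  p.Nodup ∧ 2 ≤ p.length ∧ ∀ e ∈ pathEdges p, D e.1 e.2

/-- A path decomposition of `D`: a list of paths whose edge sets partition `E(D)`. -/
def IsPathDecomp (D : V → V → Prop) (Ps : List (List V)) : Prop :=
  (∀ p ∈ Ps, IsPath D p) ∧ ((Ps.map pathEdges).flatten.Nodup) ∧
    ∀ u v : V, D u v ↔ (u, v) ∈ (Ps.map pathEdges).flatten

/-- A digraph is acyclic if it has no closed directed walk. -/
def Acyclic (D : V → V → Prop) : Prop :=
  ∀ (v : V) (c : List V), ¬ List.Chain D v (c ++ [v])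

variable {D : V → V → Prop}

lemma pathEdges_cons_cons (a b : V) (l : List V) :
    pathEdges (a :: b :: l) = (a, b) :: pathEdges (b :: l) := rfl

lemma map_fst_pathEdges (p : List V) : (pathEdges p).map Prod.fst = p.dropLast := by
  induction p with
  | nil => rfl
  | cons a l ih =>
    cases l with
    | nil => rfl
    | cons b m => simp only [pathEdges_cons_cons, List.map_cons, ih, List.dropLast_cons₂]

lemma map_snd_pathEdges (p : List V) : (pathEdges p).map Prod.snd = p.tail := by
  induction p with
  | nil => rfl
  | cons a l ih =>
    cases l with
    | nil => rfl
    | cons b m => simp only [pathEdges_cons_cons, List.map_cons, ih]; rfl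

lemma pathEdges_cons (u : V) (p : List V) (hp : p ≠ []) :
    pathEdges (u :: p) = (u, p.head hp) :: pathEdges p := by
  cases p with
  | nil => simp at hp
  | cons a l => rfl

lemma pathEdges_concat (p : List V) (hp : p ≠ []) (w : V) :
    pathEdges (p ++ [w]) = pathEdges p ++ [(p.getLast hp, w)] := by
  induction p with
  | nil => simp at hp
  | cons a l ih =>
    cases l with
    | nil => rfl
    | cons b m =>
      have h1 : a :: b :: m ++ [w] = a :: ((b :: m) ++ [w]) := rfl
      rw [h1, pathEdges_cons a _ (by simp), ih (by simp), pathEdges_cons_cons]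
      simp

lemma chain'_of_pathEdges : ∀ {p : List V}, (∀ e ∈ pathEdges p, D e.1 e.2) → p.Chain' D := by
  intro p
  induction p with
  | nil => intro _; exact List.IsChain.nil
  | cons a l ih =>
    cases l with
    | nil => intro _; exact List.isChain_singleton a
    | cons b m =>
      intro h
      rw [pathEdges_cons_cons] at h
      exact List.isChain_cons_cons.mpr ⟨h (a, b) (by simp), ih (fun e he => h e (by simp [he]))⟩

lemma chain_snoc {b : V} : ∀ (a : V) (l : List V), List.Chain D a l →
    D ((a :: l).getLast (by simp)) b → List.Chain D a (l ++ [b]) := by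
  intro a l
  induction l generalizing a with
  | nil => intro _ h; exact List.isChain_pair.mpr (by simpa using h)
  | cons c m ih =>
    intro hc he
    change List.IsChain D (a :: c :: m) at hc
    change List.IsChain D (a :: (c :: m ++ [b]))
    rw [List.isChain_cons_cons] at hc
    rw [List.cons_append, List.isChain_cons_cons]
    refine ⟨hc.1, ih c hc.2 ?_⟩
    rwa [List.getLast_cons (by simp)] at he

lemma no_loop (hac : Acyclic D) (l : List V) (hl : l ≠ []) (hc : l.Chain' D)
    (he : D (l.getLast hl) (l.head hl)) : False := by
  cases l with
  | nil => exact hl rfl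
  | cons x xs =>
    have hchain : List.Chain D x xs := hc
    exact hac x xs (chain_snoc x xs hchain (by simpa using he))

lemma no_in_head (hac : Acyclic D) {p : List V} (hp : IsPath D p) (hne : p ≠ [])
    (hmax : ∀ q, IsPath D q → q.length ≤ p.length) (u : V) :
    ¬ D u (p.head hne) := by
  intro h
  by_cases hu : u ∈ p
  · obtain ⟨i, hi, rfl⟩ := List.getElem_of_mem hu
    set l := p.take (i + 1) with hl
    have hllen : l.length = i + 1 := by simp [hl]; omega
    have hlne : l ≠ [] := by
      apply List.ne_nil_of_length_pos; omega
    have hchain : l.Chain' D := (chain'_of_pathEdges hp.2.2).prefix (List.take_prefix _ _)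
    have hhead : l.head hlne = p.head hne := by
      rw [List.head_eq_getElem, List.head_eq_getElem]
      simp [hl]
    have hlast : l.getLast hlne = p[i] := by
      rw [List.getLast_eq_getElem]
      simp only [hllen]
      simp [hl]
    exact no_loop hac l hlne hchain (by rw [hhead, hlast]; exact h)
  · have hq : IsPath D (u :: p) := by
      refine ⟨List.nodup_cons.mpr ⟨hu, hp.1⟩, by have := hp.2.1; simp; omega, ?_⟩
      rw [pathEdges_cons u p hne]
      intro e he'
      rcases List.mem_cons.mp he' with rfl | he
      · exact h
      · exact hp.2.2 _ he
    have := hmax _ hq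
    simp at this

lemma no_out_last (hac : Acyclic D) {p : List V} (hp : IsPath D p) (hne : p ≠ [])
    (hmax : ∀ q, IsPath D q → q.length ≤ p.length) (w : V) :
    ¬ D (p.getLast hne) w := by
  intro h
  by_cases hw : w ∈ p
  · obtain ⟨i, hi, rfl⟩ := List.getElem_of_mem hw
    set l := p.drop i with hl
    have hllen : l.length = p.length - i := by simp [hl]
    have hlne : l ≠ [] := by apply List.ne_nil_of_length_pos; omega
    have hchain : l.Chain' D := (chain'_of_pathEdges hp.2.2).suffix (List.drop_suffix _ _)
    have hhead : l.head hlne = p[i] := by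
      rw [List.head_eq_getElem]
      simp [hl]
    have hlast : l.getLast hlne = p.getLast hne := by
      rw [List.getLast_eq_getElem, List.getLast_eq_getElem]
      simp only [hllen, hl]
      rw [List.getElem_drop]
      congr 1
      simp only [List.length_drop]
      omega
    exact no_loop hac l hlne hchain (by rw [hhead, hlast]; exact h)
  · have hq : IsPath D (p ++ [w]) := by
      refine ⟨?_, by have := hp.2.1; simp; omega, ?_⟩
      · simp [List.nodup_append, hp.1, hw]
        intro a ha haw; exact hw (haw ▸ ha)
      · rw [pathEdges_concat p hne w]
        intro e he'
        rcases List.mem_append.mp he' with he | he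
        · exact hp.2.2 _ he
        · simp at he; subst he; exact h
    have := hmax _ hq
    simp at this

open Classical in
lemma outDeg_eq_card [Fintype V] (D : V → V → Prop) (v : V) :
    outDeg D v = (univ.filter (fun w => D v w)).card := by
  rw [outDeg, Nat.card_eq_fintype_card]
  convert Fintype.card_subtype _

open Classical in
lemma inDeg_eq_card [Fintype V] (D : V → V → Prop) (v : V) :
    inDeg D v = (univ.filter (fun u => D u v)).card := by
  rw [inDeg, Nat.card_eq_fintype_card]
  convert Fintype.card_subtype _

lemma succ_unique {p : List V} (hnd : p.Nodup) {v w w' : V}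
    (h1 : (v, w) ∈ pathEdges p) (h2 : (v, w') ∈ pathEdges p) : w = w' := by
  have hfst : ((pathEdges p).map Prod.fst).Nodup := by
    rw [map_fst_pathEdges]; exact (List.dropLast_sublist p).nodup hnd
  have := List.inj_on_of_nodup_map hfst h1 h2 rfl
  exact congrArg Prod.snd this

lemma pred_unique {p : List V} (hnd : p.Nodup) {v u u' : V}
    (h1 : (u, v) ∈ pathEdges p) (h2 : (u', v) ∈ pathEdges p) : u = u' := by
  have hsnd : ((pathEdges p).map Prod.snd).Nodup := by
    rw [map_snd_pathEdges]; exact (List.tail_sublist p).nodup hnd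
  have := List.inj_on_of_nodup_map hsnd h1 h2 rfl
  exact congrArg Prod.fst this

open Classical in
lemma card_succ_filter [Fintype V] {p : List V} (hnd : p.Nodup) (v : V) :
    (univ.filter (fun w => (v, w) ∈ pathEdges p)).card
      = if v ∈ p.dropLast then 1 else 0 := by
  split_ifs with hv
  · rw [← map_fst_pathEdges] at hv
    obtain ⟨e, he, hev⟩ := List.mem_map.mp hv
    have hve : (v, e.2) ∈ pathEdges p := by rwa [show (v, e.2) = e by ext <;> simp [hev]]
    rw [card_eq_one]
    refine ⟨e.2, ?_⟩
    ext w
    simp only [mem_filter, mem_univ, true_and, mem_singleton]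
    constructor
    · intro hw; exact succ_unique hnd hw hve
    · rintro rfl; exact hve
  · rw [card_eq_zero, filter_eq_empty_iff]
    intro w _ hw
    exact hv (by rw [← map_fst_pathEdges]; exact List.mem_map.mpr ⟨(v, w), hw, rfl⟩)

open Classical in
lemma card_pred_filter [Fintype V] {p : List V} (hnd : p.Nodup) (v : V) :
    (univ.filter (fun u => (u, v) ∈ pathEdges p)).card
      = if v ∈ p.tail then 1 else 0 := by
  split_ifs with hv
  · rw [← map_snd_pathEdges] at hv
    obtain ⟨e, he, hev⟩ := List.mem_map.mp hv
    have hve : (e.1, v) ∈ pathEdges p := by rwa [show (e.1, v) = e by ext <;> simp [hev]]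
    rw [card_eq_one]
    refine ⟨e.1, ?_⟩
    ext u
    simp only [mem_filter, mem_univ, true_and, mem_singleton]
    constructor
    · intro hu; exact pred_unique hnd hu hve
    · rintro rfl; exact hve
  · rw [card_eq_zero, filter_eq_empty_iff]
    intro u _ hu
    exact hv (by rw [← map_snd_pathEdges]; exact List.mem_map.mpr ⟨(u, v), hu, rfl⟩)

open Classical in
lemma outDeg_remove [Fintype V] {p : List V} (hnd : p.Nodup)
    (hpe : ∀ e ∈ pathEdges p, D e.1 e.2) (v : V) :
    outDeg (fun u w => D u w ∧ (u, w) ∉ pathEdges p) v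
      + (if v ∈ p.dropLast then 1 else 0) = outDeg D v := by
  rw [outDeg_eq_card, outDeg_eq_card, ← card_succ_filter hnd v]
  have hsub : (univ.filter (fun w => (v, w) ∈ pathEdges p)) ⊆ univ.filter (fun w => D v w) := by
    intro w hw
    simp only [mem_filter, mem_univ, true_and] at *
    exact hpe _ hw
  rw [eq_comm, ← card_sdiff_add_card_eq_card hsub]
  congr 1
  congr 1
  ext w
  simp [mem_sdiff]

open Classical in
lemma inDeg_remove [Fintype V] {p : List V} (hnd : p.Nodup)
    (hpe : ∀ e ∈ pathEdges p, D e.1 e.2) (v : V) :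
    inDeg (fun u w => D u w ∧ (u, w) ∉ pathEdges p) v
      + (if v ∈ p.tail then 1 else 0) = inDeg D v := by
  rw [inDeg_eq_card, inDeg_eq_card, ← card_pred_filter hnd v]
  have hsub : (univ.filter (fun u => (u, v) ∈ pathEdges p)) ⊆ univ.filter (fun u => D u v) := by
    intro u hu
    simp only [mem_filter, mem_univ, true_and] at *
    exact hpe _ hu
  rw [eq_comm, ← card_sdiff_add_card_eq_card hsub]
  congr 1
  congr 1
  ext u
  simp [mem_sdiff]

/-- Removing a directed path of maximum length from a nonempty acyclic digraph
decreases the excess by exactly one. -/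
theorem remove_longest_path_excess {V : Type*} [Fintype V] (D : V → V → Prop)
    (hac : Acyclic D) (hne : ∃ u w, D u w) (p : List V) (hp : IsPath D p)
    (hmax : ∀ q : List V, IsPath D q → q.length ≤ p.length) :
    exD (fun u w => D u w ∧ (u, w) ∉ pathEdges p) + 1 = exD D := by
  classical
  obtain ⟨hnd, hlen, hpe⟩ := hp
  have hne' : p ≠ [] := by intro h; rw [h] at hlen; simp at hlen
  set a := p.head hne' with ha
  set z := p.getLast hne' with hz
  set D' := fun u w => D u w ∧ (u, w) ∉ pathEdges p with hD'
  have hO : ∀ v, outDeg D' v + (if v ∈ p.dropLast then 1 else 0) = outDeg D v :=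
    outDeg_remove hnd hpe
  have hI : ∀ v, inDeg D' v + (if v ∈ p.tail then 1 else 0) = inDeg D v :=
    inDeg_remove hnd hpe
  -- structural membership facts
  obtain ⟨x, q, rfl⟩ : ∃ x q, p = x :: q := by
    cases p with
    | nil => exact absurd rfl hne'
    | cons x q => exact ⟨x, q, rfl⟩
  obtain ⟨y, r, rfl⟩ : ∃ y r, q = y :: r := by
    cases q with
    | nil => simp at hlen
    | cons y r => exact ⟨y, r, rfl⟩
  have hax : a = x := rfl
  have h_a_dl : a ∈ (x :: y :: r).dropLast := by rw [hax]; simp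
  have h_a_tl : a ∉ (x :: y :: r).tail := by
    rw [hax]; exact (List.nodup_cons.mp hnd).1
  have h_z_tl : z ∈ (x :: y :: r).tail := by
    rw [hz, List.getLast_cons (by simp)]
    exact List.getLast_mem _
  have h_z_dl : z ∉ (x :: y :: r).dropLast := by
    have h := hnd
    rw [← List.dropLast_append_getLast hne', List.nodup_append] at h
    intro hmem
    exact h.2.2 _ hmem _ (by simp [hz]) rfl
  have haz : a ≠ z := fun h => h_a_tl (h ▸ h_z_tl)
  -- degree facts
  have hin_a : inDeg D a = 0 := by
    rw [inDeg_eq_card, card_eq_zero, filter_eq_empty_iff]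
    intro u _
    exact no_in_head hac ⟨hnd, hlen, hpe⟩ hne' hmax u
  have hout_z : outDeg D z = 0 := by
    rw [outDeg_eq_card, card_eq_zero, filter_eq_empty_iff]
    intro w _
    exact no_out_last hac ⟨hnd, hlen, hpe⟩ hne' hmax w
  have hout_a : 1 ≤ outDeg D a := by
    rw [outDeg_eq_card]
    refine card_pos.mpr ⟨y, ?_⟩
    simp only [mem_filter, mem_univ, true_and]
    exact hax ▸ hpe (x, y) (by rw [show pathEdges (x :: y :: r) = (x,y) :: pathEdges (y :: r) from rfl]; simp)
  have hin_z : 1 ≤ inDeg D z := by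
    rw [inDeg_eq_card]
    have : z ∈ ((pathEdges (x :: y :: r)).map Prod.snd) := by
      rw [map_snd_pathEdges]; exact h_z_tl
    obtain ⟨e, hee, hev⟩ := List.mem_map.mp this
    refine card_pos.mpr ⟨e.1, ?_⟩
    simp only [mem_filter, mem_univ, true_and]
    have : (e.1, z) = e := by ext <;> simp [hev]
    exact this ▸ hpe e hee
  -- pointwise comparison
  have key : ∀ v, v ≠ a → exPlus D' v = exPlus D v := by
    intro v hva
    have h1 := hO v
    have h2 := hI v
    by_cases hvz : v = z
    · subst hvz
      rw [if_neg h_z_dl] at h1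
      rw [if_pos h_z_tl] at h2
      simp only [exPlus, exInt]
      omega
    · by_cases hvp : v ∈ (x :: y :: r)
      · have hvd : v ∈ (x :: y :: r).dropLast := by
          rw [← List.dropLast_append_getLast hne'] at hvp
          rcases List.mem_append.mp hvp with h | h
          · exact h
          · simp at h; exact absurd (h.trans hz.symm) hvz
        have hvt : v ∈ (x :: y :: r).tail := by
          rcases List.mem_cons.mp hvp with h | h
          · exact absurd (h.trans hax.symm) hva
          · exact h
        rw [if_pos hvd] at h1
        rw [if_pos hvt] at h2
        simp only [exPlus, exInt]
        omega
      · have hvd : v ∉ (x :: y :: r).dropLast :=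
          fun h => hvp ((List.dropLast_sublist _).subset h)
        have hvt : v ∉ (x :: y :: r).tail :=
          fun h => hvp ((List.tail_sublist _).subset h)
        rw [if_neg hvd] at h1
        rw [if_neg hvt] at h2
        simp only [exPlus, exInt]
        omega
  have keya : exPlus D' a + 1 = exPlus D a := by
    have h1 := hO a
    have h2 := hI a
    rw [if_pos h_a_dl] at h1
    rw [if_neg h_a_tl] at h2
    simp only [exPlus, exInt]
    omega
  -- summation
  have hsum : ∑ v ∈ univ.erase a, exPlus D' v = ∑ v ∈ univ.erase a, exPlus D v :=
    Finset.sum_congr rfl (fun v hv => key v (Finset.ne_of_mem_erase hv))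
  rw [exD, exD, ← Finset.add_sum_erase _ _ (mem_univ a), ← Finset.add_sum_erase _ _ (mem_univ a),
    hsum]
  omega
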